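/- Let $c_1, c_2 > 0$, $0 < c_3 < 2\sqrt{c_1 c_2}$, $\mu > 1$, $a_1 = 1+1/\mu$, $a_2 = 1-1/\mu$. Then for any $V_0 \geq 1$, $\int_{1}^{V_0} \frac{dV}{c_1 V^{a_1} + c_2 V^{a_2} - c_3} \leq \frac{\mu}{c_1 k_1}\left(\frac{\pi}{2} - \arctan k_2\right)$, where $k_1 = \sqrt{\frac{4c_1c_2 - c_3^2}{4c_1^2}}$ and $k_2 = \frac{2c_1 - c_3}{\sqrt{4c_1c_2 - c_3^2}}$. -/

import Mathlib

open Real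

theorem stmt9 (c1 c2 c3 μ : ℝ) (hc1 : 0 < c1) (hc2 : 0 < c2)
    (hc3pos : 0 < c3) (hc3 : c3 < 2 * Real.sqrt (c1 * c2)) (hμ : 1 < μ)
    (V0 : ℝ) (hV0 : 1 ≤ V0) :
    ∫ V in (1:ℝ)..V0, 1 / (c1 * V ^ (1 + 1/μ) + c2 * V ^ (1 - 1/μ) - c3) ≤
      μ / (c1 * Real.sqrt ((4*c1*c2 - c3^2) / (4*c1^2))) *
        (Real.pi / 2 - Real.arctan ((2*c1 - c3) / Real.sqrt (4*c1*c2 - c3^2))) := by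
  have hμ0 : (0:ℝ) < μ := lt_trans one_pos hμ
  have hdisc : 0 < 4*c1*c2 - c3^2 := by
    have h := Real.sq_sqrt (mul_nonneg hc1.le hc2.le)
    nlinarith [Real.sqrt_nonneg (c1*c2)]
  set s := Real.sqrt (4*c1*c2 - c3^2) with hs_def
  have hs : 0 < s := Real.sqrt_pos.mpr hdisc
  have hs2 : s^2 = 4*c1*c2 - c3^2 := Real.sq_sqrt hdisc.le
  set K := Real.sqrt ((4*c1*c2 - c3^2) / (4*c1^2)) with hK_def
  have hK : 0 < K := Real.sqrt_pos.mpr (by positivity)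
  have hK2 : K^2 = (4*c1*c2 - c3^2)/(4*c1^2) := Real.sq_sqrt (by positivity)
  set d := c3/(2*c1) with hd_def
  set F : ℝ → ℝ := fun V => μ/(c1*K) * Real.arctan ((V^(1/μ) - d)/K) with hF_def
  set f : ℝ → ℝ := fun V => 1/(c1*V^(1+1/μ) + c2*V^(1-1/μ) - c3*V) with hf_def
  -- denominators positive on [1, V0]
  have hAMGM : ∀ V : ℝ, 1 ≤ V → 2 * Real.sqrt (c1*c2) * V ≤
      c1*V^(1+1/μ) + c2*V^(1-1/μ) := by
    intro V hV
    have hVpos : (0:ℝ) < V := lt_of_lt_of_le one_pos hV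
    have hA : (0:ℝ) ≤ c1*V^(1+1/μ) := by positivity
    have hB : (0:ℝ) ≤ c2*V^(1-1/μ) := by positivity
    have hAB : (c1*V^(1+1/μ)) * (c2*V^(1-1/μ)) = c1*c2*V^2 := by
      have : V^(1+1/μ) * V^(1-1/μ) = V^2 := by
        rw [← Real.rpow_add hVpos]
        norm_num
      calc (c1*V^(1+1/μ)) * (c2*V^(1-1/μ)) = c1*c2*(V^(1+1/μ) * V^(1-1/μ)) := by ring
        _ = c1*c2*V^2 := by rw [this]
    have h1 : Real.sqrt ((c1*V^(1+1/μ)) * (c2*V^(1-1/μ))) = Real.sqrt (c1*c2) * V := by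
      rw [hAB, Real.sqrt_mul (by positivity), Real.sqrt_sq hVpos.le]
    have h2 : Real.sqrt ((c1*V^(1+1/μ)) * (c2*V^(1-1/μ)))
        = Real.sqrt (c1*V^(1+1/μ)) * Real.sqrt (c2*V^(1-1/μ)) := Real.sqrt_mul hA _
    nlinarith [sq_nonneg (Real.sqrt (c1*V^(1+1/μ)) - Real.sqrt (c2*V^(1-1/μ))),
      Real.sq_sqrt hA, Real.sq_sqrt hB]
  have hden1 : ∀ V : ℝ, 1 ≤ V → 0 < c1*V^(1+1/μ) + c2*V^(1-1/μ) - c3 := by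
    intro V hV
    have h := hAMGM V hV
    nlinarith [mul_pos (sub_pos.mpr hc3) (lt_of_lt_of_le one_pos hV),
      mul_le_mul_of_nonneg_left hV (le_of_lt hc3pos)]
  have hden2 : ∀ V : ℝ, 1 ≤ V → 0 < c1*V^(1+1/μ) + c2*V^(1-1/μ) - c3*V := by
    intro V hV
    have h := hAMGM V hV
    have hVpos : (0:ℝ) < V := lt_of_lt_of_le one_pos hV
    nlinarith [mul_pos (sub_pos.mpr hc3) hVpos]
  -- derivative of F
  have hderiv : ∀ V : ℝ, 1 ≤ V → HasDerivAt F (f V) V := by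
    intro V hV
    have hVpos : (0:ℝ) < V := lt_of_lt_of_le one_pos hV
    have h1 : HasDerivAt (fun x : ℝ => x^(1/μ)) ((1/μ)*V^(1/μ-1)) V :=
      Real.hasDerivAt_rpow_const (Or.inl hVpos.ne')
    have h2 := (h1.sub_const d).div_const K
    have h3 := (Real.hasDerivAt_arctan ((V^(1/μ) - d)/K)).comp V h2
    have h4 := h3.const_mul (μ/(c1*K))
    refine h4.congr_deriv ?_
    symm
    -- value identity
    have hu : (0:ℝ) < V^(1/μ) := Real.rpow_pos_of_pos hVpos _
    set u := V^(1/μ) with hu_def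
    have e1 : V^(1+1/μ) = V * u := by
      rw [hu_def, ← Real.rpow_one_add' hVpos.le (by positivity)]
    have e2 : V^(1-1/μ) = V / u := by
      rw [hu_def, eq_div_iff hu.ne', ← Real.rpow_add hVpos]
      norm_num
    have e3 : V^(1/μ-1) = u / V := by
      rw [hu_def, eq_div_iff hVpos.ne', ← Real.rpow_add_one hVpos.ne']
      norm_num
    have hK2' : K^2 * (4*c1^2) = 4*c1*c2 - c3^2 := by
      rw [hK2]; field_simp
    have key : c1*(V*u) + c2*(V/u) - c3*V = (V/u) * (c1*(K^2 + (u-d)^2)) := by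
      rw [hd_def]
      field_simp
      linear_combination (-1) * hK2'
    rw [hf_def]
    simp only [e1, e2, e3, key]
    have h1p : (0:ℝ) < 1 + ((u - d)/K)^2 := by positivity
    have hKd : (0:ℝ) < K^2 + (u - d)^2 := by positivity
    field_simp
  -- continuity / integrability
  have hIcc : Set.uIcc (1:ℝ) V0 = Set.Icc 1 V0 := Set.uIcc_of_le hV0
  have hrpow : ∀ a : ℝ, ContinuousOn (fun V : ℝ => V ^ a) (Set.Icc 1 V0) := by
    intro a
    exact ContinuousOn.rpow_const continuousOn_id
      (fun x hx => Or.inl (ne_of_gt (lt_of_lt_of_le one_pos hx.1)))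
  have hcden : ContinuousOn
      (fun V : ℝ => c1*V^(1+1/μ) + c2*V^(1-1/μ)) (Set.Icc 1 V0) :=
    ((continuousOn_const.mul (hrpow _)).add (continuousOn_const.mul (hrpow _)))
  have hig : IntervalIntegrable
      (fun V : ℝ => 1 / (c1 * V ^ (1 + 1/μ) + c2 * V ^ (1 - 1/μ) - c3)) MeasureTheory.volume 1 V0 := by
    apply ContinuousOn.intervalIntegrable
    rw [hIcc]
    exact continuousOn_const.div (hcden.sub continuousOn_const)
      (fun x hx => (hden1 x hx.1).ne')
  have hif : IntervalIntegrable f MeasureTheory.volume 1 V0 := by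
    apply ContinuousOn.intervalIntegrable
    rw [hIcc, hf_def]
    exact continuousOn_const.div (hcden.sub (continuousOn_const.mul continuousOn_id))
      (fun x hx => (hden2 x hx.1).ne')
  have hmono : ∫ V in (1:ℝ)..V0, 1 / (c1 * V ^ (1 + 1/μ) + c2 * V ^ (1 - 1/μ) - c3)
      ≤ ∫ V in (1:ℝ)..V0, f V := by
    apply intervalIntegral.integral_mono_on hV0 hig hif
    intro x hx
    rw [hf_def]
    apply one_div_le_one_div_of_le (hden2 x hx.1)
    have : c3 ≤ c3 * x := by nlinarith [hx.1]
    linarith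
  have hftc : ∫ V in (1:ℝ)..V0, f V = F V0 - F 1 := by
    apply intervalIntegral.integral_eq_sub_of_hasDerivAt
    · intro x hx
      rw [hIcc] at hx
      exact hderiv x hx.1
    · exact hif
  have hKs : K = s / (2*c1) := by
    rw [hK_def, hs_def, Real.sqrt_div hdisc.le, show (4*c1^2 : ℝ) = (2*c1)^2 by ring,
      Real.sqrt_sq (by positivity)]
  have hF1 : F 1 = μ/(c1*K) * Real.arctan ((2*c1 - c3)/s) := by
    rw [hF_def]
    simp only [Real.one_rpow]
    congr 1
    rw [hKs, hd_def]
    field_simp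
  have hFV0 : F V0 ≤ μ/(c1*K) * (Real.pi/2) := by
    rw [hF_def]
    exact mul_le_mul_of_nonneg_left ((Real.arctan_lt_pi_div_two _).le) (by positivity)
  calc ∫ V in (1:ℝ)..V0, 1 / (c1 * V ^ (1 + 1/μ) + c2 * V ^ (1 - 1/μ) - c3)
      ≤ ∫ V in (1:ℝ)..V0, f V := hmono
    _ = F V0 - F 1 := hftc
    _ ≤ μ/(c1*K) * (Real.pi/2) - μ/(c1*K) * Real.arctan ((2*c1 - c3)/s) := by
        rw [hF1]; linarith
    _ = μ/(c1*K) * (Real.pi/2 - Real.arctan ((2*c1 - c3)/s)) := by ring
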